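/- arXiv:2410.00525 — 4 statements merged into one kernel-verified Lean document; each statement's English description precedes it below -/
import Mathlib

section
/- Under the stated smoothness assumptions on ξ, let a : ℝ → ℝ be continuously differentiable, κ > 0, and define the matrix field D(q) := κ(P⊥(q) + a(ξ(q)) P(q)) = κ(I_d + (a(ξ(q)) − 1)P(q)). Then for every q ∈ ℝ^d, div D(q) = κ (a(ξ(q)) − 1) [ (∇²ξ(q)∇ξ(q))/‖∇ξ(q)‖² + (Δξ(q)/‖∇ξ(q)‖²) ∇ξ(q) − 2 ((∇ξ(q)ᵀ∇²ξ(q)∇ξ(q))/‖∇ξ(q)‖⁴) ∇ξ(q) ] + κ a'(ξ(q)) ∇ξ(q). -/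
open Matrix BigOperators

/-- Partial derivative `∂_j f (q)` of a scalar field on `ℝ^d`. -/
noncomputable def pdrv {d : ℕ} (j : Fin d) (f : (Fin d → ℝ) → ℝ) (q : Fin d → ℝ) : ℝ :=
  fderiv ℝ f q (Pi.single j 1)

/-- Gradient `∇f(q)` of a scalar field on `ℝ^d`. -/
noncomputable def gradv {d : ℕ} (f : (Fin d → ℝ) → ℝ) (q : Fin d → ℝ) : Fin d → ℝ :=
  fun j => pdrv j f q

/-- Hessian matrix `∇²f(q)`, with entries `(i,j) ↦ ∂_j ∂_i f(q)`. -/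
noncomputable def hessM {d : ℕ} (f : (Fin d → ℝ) → ℝ) (q : Fin d → ℝ) :
    Matrix (Fin d) (Fin d) ℝ :=
  Matrix.of fun i j => pdrv j (fun q' => pdrv i f q') q

/-- Laplacian `Δf(q)`. -/
noncomputable def lapl {d : ℕ} (f : (Fin d → ℝ) → ℝ) (q : Fin d → ℝ) : ℝ :=
  ∑ i, hessM f q i i

/-- Divergence of a matrix field, `(div M)_i = ∑_j ∂_j M_{ij}`. -/
noncomputable def divMat {d : ℕ} (M : (Fin d → ℝ) → Matrix (Fin d) (Fin d) ℝ)
    (q : Fin d → ℝ) : Fin d → ℝ :=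
  fun i => ∑ j, pdrv j (fun q' => M q' i j) q

/-- The projection field `P(q) = ∇ξ(q) ⊗ ∇ξ(q)/‖∇ξ(q)‖²`. -/
noncomputable def projP {d : ℕ} (ξ : (Fin d → ℝ) → ℝ) (q : Fin d → ℝ) :
    Matrix (Fin d) (Fin d) ℝ :=
  Matrix.of fun i j => gradv ξ q i * gradv ξ q j / (∑ k, gradv ξ q k ^ 2)

/-- Divergence of the diffusion field `D(q) = κ(I + (a(ξ(q)) − 1)P(q))`:
`div D = κ(a(ξ) − 1)[∇²ξ∇ξ/‖∇ξ‖² + (Δξ/‖∇ξ‖²)∇ξ − 2(∇ξᵀ∇²ξ∇ξ/‖∇ξ‖⁴)∇ξ] + κ a'(ξ)∇ξ`. -/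
theorem div_diffusion_field (d : ℕ) (ξ : (Fin d → ℝ) → ℝ)
    (hξ : ContDiff ℝ 2 ξ) (hgrad : ∀ q, gradv ξ q ≠ 0)
    (a : ℝ → ℝ) (ha : ContDiff ℝ 1 a) (κ : ℝ) (hκ : 0 < κ) (q : Fin d → ℝ) :
    ∀ i, divMat
        (fun q' => κ • ((1 : Matrix (Fin d) (Fin d) ℝ) + (a (ξ q') - 1) • projP ξ q')) q i
      = κ * (a (ξ q) - 1) *
          ((hessM ξ q *ᵥ gradv ξ q) i / (∑ k, gradv ξ q k ^ 2)
            + lapl ξ q / (∑ k, gradv ξ q k ^ 2) * gradv ξ q i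
            - 2 * (gradv ξ q ⬝ᵥ (hessM ξ q *ᵥ gradv ξ q)) / (∑ k, gradv ξ q k ^ 2) ^ 2
                * gradv ξ q i)
        + κ * deriv a (ξ q) * gradv ξ q i := by
  intro i
  classical
  -- notation
  set g : Fin d → (Fin d → ℝ) → ℝ := fun k q' => pdrv k ξ q' with hg_def
  set N : (Fin d → ℝ) → ℝ := fun q' => ∑ k, (g k q') ^ 2 with hN_def
  have hgC : ∀ k, ContDiff ℝ 1 (g k) := fun k =>
    (hξ.fderiv_right le_rfl).clm_apply contDiff_const
  have hg' : ∀ k, HasFDerivAt (g k) (fderiv ℝ (g k) q) q := fun k =>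
    ((hgC k).differentiable one_ne_zero q).hasFDerivAt
  set Gd : Fin d → (Fin d → ℝ) →L[ℝ] ℝ := fun k => fderiv ℝ (g k) q with hGd_def
  have hGdv : ∀ k j, Gd k (Pi.single j 1) = hessM ξ q k j := fun _ _ => rfl
  have hNpos : (0:ℝ) < N q := by
    obtain ⟨k, hk⟩ := Function.ne_iff.mp (hgrad q)
    have hk' : g k q ≠ 0 := hk
    exact Finset.sum_pos' (fun _ _ => sq_nonneg _) ⟨k, Finset.mem_univ k, by positivity⟩
  have hNq : N q ≠ 0 := ne_of_gt hNpos
  have hpow : ∀ k, HasFDerivAt (fun q' => g k q' ^ 2) ((2 * g k q) • Gd k) q := by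
    intro k
    have h : HasFDerivAt (fun q' => g k q' * g k q') _ q := (hg' k).mul (hg' k)
    have e1 : (fun q' => g k q' * g k q') = fun q' => g k q' ^ 2 := by
      funext x; ring
    rw [e1] at h
    rw [two_mul, add_smul]
    exact h
  have hN' : HasFDerivAt N (∑ k, (2 * g k q) • Gd k) q :=
    by have h := HasFDerivAt.sum (u := Finset.univ) fun k _ => hpow k; rw [Finset.sum_fn] at h; exact h
  have hξ' : HasFDerivAt ξ (fderiv ℝ ξ q) q :=
    ((hξ.differentiable (by norm_num)) q).hasFDerivAt
  have hξv : ∀ j : Fin d, fderiv ℝ ξ q (Pi.single j 1) = gradv ξ q j := fun _ => rfl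
  have haD : HasDerivAt a (deriv a (ξ q)) (ξ q) :=
    ((ha.differentiable one_ne_zero) (ξ q)).hasDerivAt
  have hA : HasFDerivAt (fun q' => a (ξ q') - 1) (deriv a (ξ q) • fderiv ℝ ξ q) q :=
    (haD.comp_hasFDerivAt q hξ').sub_const 1
  have hInv : HasFDerivAt (fun q' => (N q')⁻¹)
      ((-(N q ^ 2)⁻¹) • (∑ k, (2 * g k q) • Gd k)) q :=
    (hasDerivAt_inv hNq).comp_hasFDerivAt q hN'
  -- per-coordinate derivative of the matrix entry
  have key : ∀ j : Fin d,
      pdrv j (fun q' => (κ • ((1 : Matrix (Fin d) (Fin d) ℝ)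
          + (a (ξ q') - 1) • projP ξ q')) i j) q
      = κ * (a (ξ q) - 1) * (N q)⁻¹ * (hessM ξ q i j * gradv ξ q j)
        + κ * (a (ξ q) - 1) * gradv ξ q i * (N q)⁻¹ * hessM ξ q j j
        - 2 * κ * (a (ξ q) - 1) * gradv ξ q i * ((N q) ^ 2)⁻¹
            * ((∑ k, gradv ξ q k * hessM ξ q k j) * gradv ξ q j)
        + κ * deriv a (ξ q) * gradv ξ q i * (N q)⁻¹ * gradv ξ q j ^ 2 := by
    intro j
    have hu : HasFDerivAt (fun q' => g i q' * g j q')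
        (g i q • Gd j + g j q • Gd i) q := (hg' i).mul (hg' j)
    have hQ : HasFDerivAt (fun q' => g i q' * g j q' * (N q')⁻¹)
        ((g i q * g j q) • ((-(N q ^ 2)⁻¹) • (∑ k, (2 * g k q) • Gd k))
          + (N q)⁻¹ • (g i q • Gd j + g j q • Gd i)) q := hu.mul hInv
    have hE : HasFDerivAt
        (fun q' => κ * ((if i = j then (1:ℝ) else 0)
            + (a (ξ q') - 1) * (g i q' * g j q' * (N q')⁻¹)))
        (κ • ((a (ξ q) - 1) • ((g i q * g j q) • ((-(N q ^ 2)⁻¹)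
              • (∑ k, (2 * g k q) • Gd k))
            + (N q)⁻¹ • (g i q • Gd j + g j q • Gd i))
          + (g i q * g j q * (N q)⁻¹) • (deriv a (ξ q) • fderiv ℝ ξ q))) q :=
      ((hA.mul hQ).const_add _).const_mul κ
    have hfun : (fun q' => (κ • ((1 : Matrix (Fin d) (Fin d) ℝ)
          + (a (ξ q') - 1) • projP ξ q')) i j)
        = (fun q' => κ * ((if i = j then (1:ℝ) else 0)
            + (a (ξ q') - 1) * (g i q' * g j q' * (N q')⁻¹))) := by
      funext q'
      simp only [Matrix.smul_apply, Matrix.add_apply, Matrix.one_apply, Matrix.smul_apply,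
        projP, Matrix.of_apply, smul_eq_mul, hg_def, hN_def, gradv, div_eq_mul_inv]
    have hpd : pdrv j (fun q' => (κ • ((1 : Matrix (Fin d) (Fin d) ℝ)
          + (a (ξ q') - 1) • projP ξ q')) i j) q
        = (κ • ((a (ξ q) - 1) • ((g i q * g j q) • ((-(N q ^ 2)⁻¹)
              • (∑ k, (2 * g k q) • Gd k))
            + (N q)⁻¹ • (g i q • Gd j + g j q • Gd i))
          + (g i q * g j q * (N q)⁻¹) • (deriv a (ξ q) • fderiv ℝ ξ q)))
          (Pi.single j 1) := by
      rw [hfun]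
      show fderiv ℝ _ q (Pi.single j 1) = _
      rw [hE.fderiv]
    rw [hpd]
    have hgg : ∀ k : Fin d, g k q = gradv ξ q k := fun _ => rfl
    simp only [ContinuousLinearMap.smul_apply, ContinuousLinearMap.add_apply,
      ContinuousLinearMap.sum_apply, hGdv, hξv, smul_eq_mul, pow_one, hgg,
      Nat.cast_ofNat]
    have hmulsum : (∑ k, 2 * gradv ξ q k * hessM ξ q k j)
        = 2 * ∑ k, gradv ξ q k * hessM ξ q k j := by
      rw [Finset.mul_sum]
      exact Finset.sum_congr rfl fun k _ => by ring
    rw [Finset.sum_congr rfl fun k _ => (by ring :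
      2 * gradv ξ q k * hessM ξ q k j = 2 * (gradv ξ q k * hessM ξ q k j))]
    rw [← Finset.mul_sum]
    ring
  -- sum over j
  have hdiv : divMat (fun q' => κ • ((1 : Matrix (Fin d) (Fin d) ℝ)
      + (a (ξ q') - 1) • projP ξ q')) q i
      = ∑ j, (κ * (a (ξ q) - 1) * (N q)⁻¹ * (hessM ξ q i j * gradv ξ q j)
        + κ * (a (ξ q) - 1) * gradv ξ q i * (N q)⁻¹ * hessM ξ q j j
        - 2 * κ * (a (ξ q) - 1) * gradv ξ q i * ((N q) ^ 2)⁻¹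
            * ((∑ k, gradv ξ q k * hessM ξ q k j) * gradv ξ q j)
        + κ * deriv a (ξ q) * gradv ξ q i * (N q)⁻¹ * gradv ξ q j ^ 2) :=
    Finset.sum_congr rfl fun j _ => key j
  rw [hdiv]
  have hsplit : ∑ j, (κ * (a (ξ q) - 1) * (N q)⁻¹ * (hessM ξ q i j * gradv ξ q j)
        + κ * (a (ξ q) - 1) * gradv ξ q i * (N q)⁻¹ * hessM ξ q j j
        - 2 * κ * (a (ξ q) - 1) * gradv ξ q i * ((N q) ^ 2)⁻¹
            * ((∑ k, gradv ξ q k * hessM ξ q k j) * gradv ξ q j)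
        + κ * deriv a (ξ q) * gradv ξ q i * (N q)⁻¹ * gradv ξ q j ^ 2)
      = κ * (a (ξ q) - 1) * (N q)⁻¹ * (∑ j, hessM ξ q i j * gradv ξ q j)
        + κ * (a (ξ q) - 1) * gradv ξ q i * (N q)⁻¹ * (∑ j, hessM ξ q j j)
        - 2 * κ * (a (ξ q) - 1) * gradv ξ q i * ((N q) ^ 2)⁻¹
            * (∑ j, (∑ k, gradv ξ q k * hessM ξ q k j) * gradv ξ q j)
        + κ * deriv a (ξ q) * gradv ξ q i * (N q)⁻¹ * (∑ j, gradv ξ q j ^ 2) := by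
    simp only [Finset.sum_add_distrib, Finset.sum_sub_distrib, ← Finset.mul_sum]
  rw [hsplit]
  have h1 : (∑ j, hessM ξ q i j * gradv ξ q j) = (hessM ξ q *ᵥ gradv ξ q) i := by
    simp [Matrix.mulVec, dotProduct]
  have h2 : (∑ j, hessM ξ q j j) = lapl ξ q := rfl
  have h3 : (∑ j, (∑ k, gradv ξ q k * hessM ξ q k j) * gradv ξ q j)
      = gradv ξ q ⬝ᵥ (hessM ξ q *ᵥ gradv ξ q) := by
    simp only [Finset.sum_mul, dotProduct, Matrix.mulVec, Finset.mul_sum]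
    rw [Finset.sum_comm]
    exact Finset.sum_congr rfl fun k _ => Finset.sum_congr rfl fun j _ => by ring
  have h4 : (∑ j, gradv ξ q j ^ 2) = N q := rfl
  rw [h1, h2, h3, h4]
  field_simp [hNq]
end

section
/- Let β > 0, let F : ℝ → ℝ be differentiable, let σ² : ℝ → ℝ and a : ℝ → ℝ be differentiable functions, and let b : ℝ → ℝ satisfy b(z) = −σ²(z) F'(z) + β⁻¹ (σ²)'(z) for all z. Define b_a(z) := a(z) b(z) + β⁻¹ a'(z) σ²(z) and σ_a²(z) := a(z) σ²(z). Then for all z ∈ ℝ, b_a(z) = −σ_a²(z) F'(z) + β⁻¹ (σ_a²)'(z). -/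
/-- Drift–noise compatibility identity: if `b = −σ²F' + β⁻¹(σ²)'`, then the modified drift
`b_a = a b + β⁻¹ a' σ²` and squared diffusion `σ_a² = a σ²` satisfy
`b_a = −σ_a² F' + β⁻¹ (σ_a²)'`. -/
theorem drift_noise_relation (β : ℝ) (hβ : 0 < β) (F σsq a b : ℝ → ℝ)
    (hF : Differentiable ℝ F) (hσsq : Differentiable ℝ σsq) (ha : Differentiable ℝ a)
    (hb : ∀ z, b z = - σsq z * deriv F z + β⁻¹ * deriv σsq z) :
    ∀ z, a z * b z + β⁻¹ * deriv a z * σsq z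
      = -(a z * σsq z) * deriv F z + β⁻¹ * deriv (fun y => a y * σsq y) z := by
  intro z
  rw [deriv_fun_mul (ha z) (hσsq z), hb z]
  ring
end

section
/- Under the stated smoothness assumptions on ξ, let V : ℝ^d → ℝ be continuously differentiable, a : ℝ → ℝ continuously differentiable with a > 0, β > 0, and define the matrix field D(q) := P⊥(q) + a(ξ(q)) P(q). Then for every q ∈ ℝ^d the drift of ξ under the generator of the reversible diffusion with diffusion matrix D satisfies: ∇ξ(q) · ( −D(q)∇V(q) + β⁻¹ div D(q) ) + β⁻¹ Σ_{i,j} D_{ij}(q) ∂²_{ij}ξ(q) = −a(ξ(q)) ( ∇V(q)·∇ξ(q) − β⁻¹ Δξ(q) ) + β⁻¹ a'(ξ(q)) ‖∇ξ(q)‖². -/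
open Matrix BigOperators

section PdrvLemmas

variable {d : ℕ} {j : Fin d} {f g : (Fin d → ℝ) → ℝ} {q : Fin d → ℝ}

theorem pdrv_const (c : ℝ) : pdrv j (fun _ => c) q = 0 := by
  simp [pdrv]

theorem pdrv_add (hf : DifferentiableAt ℝ f q) (hg : DifferentiableAt ℝ g q) :
    pdrv j (fun x => f x + g x) q = pdrv j f q + pdrv j g q := by
  simp [pdrv, fderiv_fun_add hf hg]

theorem pdrv_mul (hf : DifferentiableAt ℝ f q) (hg : DifferentiableAt ℝ g q) :
    pdrv j (fun x => f x * g x) q = f q * pdrv j g q + g q * pdrv j f q := by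
  simp [pdrv, fderiv_fun_mul hf hg]

theorem pdrv_sum {ι : Type*} (u : Finset ι) (A : ι → (Fin d → ℝ) → ℝ)
    (h : ∀ i ∈ u, DifferentiableAt ℝ (A i) q) :
    pdrv j (fun x => ∑ i ∈ u, A i x) q = ∑ i ∈ u, pdrv j (A i) q := by
  simp [pdrv, fderiv_fun_sum h]

theorem pdrv_inv (hf : DifferentiableAt ℝ f q) (hne : f q ≠ 0) :
    pdrv j (fun x => (f x)⁻¹) q = -(f q ^ 2)⁻¹ * pdrv j f q := by
  have h : fderiv ℝ (fun x => (f x)⁻¹) q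
      = (fderiv ℝ (fun y : ℝ => y⁻¹) (f q)).comp (fderiv ℝ f q) :=
    fderiv_comp q (differentiableAt_inv hne) hf
  simp [pdrv, h, fderiv_inv, mul_comm]

theorem pdrv_comp (a : ℝ → ℝ) (ha : DifferentiableAt ℝ a (f q)) (hf : DifferentiableAt ℝ f q) :
    pdrv j (fun x => a (f x)) q = deriv a (f q) * pdrv j f q := by
  have h : fderiv ℝ (fun x => a (f x)) q = (fderiv ℝ a (f q)).comp (fderiv ℝ f q) :=
    fderiv_comp q ha hf
  have h2 : ∀ r : ℝ, fderiv ℝ a (f q) r = r * deriv a (f q) := by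
    intro r
    have : fderiv ℝ a (f q) r = fderiv ℝ a (f q) (r • (1:ℝ)) := by norm_num
    rw [this, _root_.map_smul]
    rw [smul_eq_mul]; rfl
  simp [pdrv, h, h2, mul_comm]

end PdrvLemmas

/-- Drift of `ξ` under the generator of the reversible diffusion with matrix
`D = P⊥ + a(ξ)P`:
`∇ξ·(−D∇V + β⁻¹div D) + β⁻¹ D:∇²ξ = −a(ξ)(∇V·∇ξ − β⁻¹Δξ) + β⁻¹a'(ξ)‖∇ξ‖²`. -/
theorem effective_drift_identity (d : ℕ) (ξ : (Fin d → ℝ) → ℝ)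
    (hξ : ContDiff ℝ 2 ξ) (hgrad : ∀ q, gradv ξ q ≠ 0)
    (V : (Fin d → ℝ) → ℝ) (hV : ContDiff ℝ 1 V)
    (a : ℝ → ℝ) (ha : ContDiff ℝ 1 a) (hapos : ∀ z, 0 < a z)
    (β : ℝ) (hβ : 0 < β) (q : Fin d → ℝ) :
    let D : (Fin d → ℝ) → Matrix (Fin d) (Fin d) ℝ :=
      fun q' => ((1 : Matrix (Fin d) (Fin d) ℝ) - projP ξ q') + a (ξ q') • projP ξ q'
    gradv ξ q ⬝ᵥ (-(D q *ᵥ gradv V q) + β⁻¹ • divMat D q)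
        + β⁻¹ * ∑ i, ∑ j, D q i j * hessM ξ q i j
      = - a (ξ q) * (gradv V q ⬝ᵥ gradv ξ q - β⁻¹ * lapl ξ q)
        + β⁻¹ * deriv a (ξ q) * (∑ k, gradv ξ q k ^ 2) := by
  intro D
  classical
  -- Differentiability facts
  have hξ1 : Differentiable ℝ ξ := hξ.differentiable two_ne_zero
  have hfd : ContDiff ℝ 1 (fderiv ℝ ξ) := hξ.fderiv_right (by norm_num)
  have hgi : ∀ i : Fin d, Differentiable ℝ (fun q' => gradv ξ q' i) := by
    intro i
    have h : (fun q' => gradv ξ q' i) = fun q' => fderiv ℝ ξ q' (Pi.single i 1) := rfl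
    rw [h]
    exact (hfd.clm_apply contDiff_const).differentiable one_ne_zero
  have hn2 : Differentiable ℝ (fun q' => ∑ k, gradv ξ q' k ^ 2) :=
    Differentiable.fun_sum fun k _ => (hgi k).pow 2
  have hn2ne : ∀ q', (∑ k, gradv ξ q' k ^ 2) ≠ 0 := by
    intro q'
    have h := hgrad q'
    rw [Function.ne_iff] at h
    obtain ⟨k, hk⟩ := h
    have hk' : gradv ξ q' k ≠ 0 := by simpa using hk
    have : (0:ℝ) < ∑ k, gradv ξ q' k ^ 2 :=
      Finset.sum_pos' (fun i _ => sq_nonneg _) ⟨k, Finset.mem_univ k, by positivity⟩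
    exact ne_of_gt this
  have haξ : Differentiable ℝ (fun q' => a (ξ q')) :=
    (ha.differentiable one_ne_zero).comp hξ1
  -- Entry formula for D
  have hD : ∀ (q' : Fin d → ℝ) (i j' : Fin d), D q' i j' = (if i = j' then (1:ℝ) else 0)
      + (a (ξ q') - 1) * (gradv ξ q' i * gradv ξ q' j' * (∑ k, gradv ξ q' k ^ 2)⁻¹) := by
    intro q' i j'
    show ((1 : Matrix (Fin d) (Fin d) ℝ) - projP ξ q' + a (ξ q') • projP ξ q') i j' = _
    simp only [Matrix.add_apply, Matrix.sub_apply, Matrix.smul_apply, Matrix.one_apply,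
      projP, Matrix.of_apply, smul_eq_mul, div_eq_mul_inv]
    ring
  -- basic partial derivative computations at q
  have pg : ∀ i j' : Fin d, pdrv j' (fun q' => gradv ξ q' i) q = hessM ξ q i j' :=
    fun i j' => rfl
  have pn2 : ∀ j' : Fin d, pdrv j' (fun q' => ∑ k, gradv ξ q' k ^ 2) q
      = ∑ k, 2 * gradv ξ q k * hessM ξ q k j' := by
    intro j'
    rw [pdrv_sum Finset.univ _ (fun k _ => ((hgi k).fun_pow 2).differentiableAt)]
    refine Finset.sum_congr rfl fun k _ => ?_
    have h : (fun q' => gradv ξ q' k ^ 2) = fun q' => gradv ξ q' k * gradv ξ q' k := by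
      funext q'; ring
    rw [h, pdrv_mul ((hgi k) q) ((hgi k) q), pg]
    ring
  have pa : ∀ j' : Fin d, pdrv j' (fun q' => a (ξ q') - 1) q
      = deriv a (ξ q) * gradv ξ q j' := by
    intro j'
    have h : (fun q' => a (ξ q') - 1) = fun q' => a (ξ q') + (-1 : ℝ) := by funext q'; ring
    rw [h, pdrv_add (haξ q) (differentiableAt_const _), pdrv_const,
      pdrv_comp a ((ha.differentiable one_ne_zero) (ξ q)) (hξ1 q)]
    have h2 : pdrv j' ξ q = gradv ξ q j' := rfl
    rw [h2]; ring
  have pinv : ∀ j' : Fin d, pdrv j' (fun q' => (∑ k, gradv ξ q' k ^ 2)⁻¹) q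
      = -((∑ k, gradv ξ q k ^ 2) ^ 2)⁻¹ * ∑ k, 2 * gradv ξ q k * hessM ξ q k j' := by
    intro j'
    rw [pdrv_inv (hn2 q) (hn2ne q), pn2]
  -- derivative of the D entries
  have hDd : ∀ i j' : Fin d, pdrv j' (fun q' => D q' i j') q
      = deriv a (ξ q) * gradv ξ q j' *
          (gradv ξ q i * gradv ξ q j' * (∑ k, gradv ξ q k ^ 2)⁻¹)
        + (a (ξ q) - 1) *
          ((gradv ξ q i * (hessM ξ q j' j' * (∑ k, gradv ξ q k ^ 2)⁻¹
              + gradv ξ q j' *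
                (-((∑ k, gradv ξ q k ^ 2) ^ 2)⁻¹ * ∑ k, 2 * gradv ξ q k * hessM ξ q k j'))
            + gradv ξ q j' * (∑ k, gradv ξ q k ^ 2)⁻¹ * hessM ξ q i j')
            ) := by
    intro i j'
    have h : (fun q' => D q' i j') = fun q' => (if i = j' then (1:ℝ) else 0)
        + ((a (ξ q') - 1) *
            (gradv ξ q' i * (gradv ξ q' j' * (∑ k, gradv ξ q' k ^ 2)⁻¹))) := by
      funext q'
      rw [hD q' i j']; ring
    rw [h]
    have d0 : DifferentiableAt ℝ (fun q' => a (ξ q') - 1) q := (haξ.sub_const 1) q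
    have dinv : DifferentiableAt ℝ (fun q' => (∑ k, gradv ξ q' k ^ 2)⁻¹) q :=
      (hn2 q).inv (hn2ne q)
    have d2 : DifferentiableAt ℝ (fun q' => gradv ξ q' j' * (∑ k, gradv ξ q' k ^ 2)⁻¹) q :=
      ((hgi j') q).mul dinv
    have d3 : DifferentiableAt ℝ
        (fun q' => gradv ξ q' i * (gradv ξ q' j' * (∑ k, gradv ξ q' k ^ 2)⁻¹)) q :=
      ((hgi i) q).mul d2
    rw [pdrv_add (differentiableAt_const _) (d0.fun_mul d3), pdrv_const,
      pdrv_mul d0 d3, pdrv_mul ((hgi i) q) d2, pdrv_mul ((hgi j') q) dinv,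
      pa, pinv, pg, pg]
    ring
  -- instantiate at q
  have hNne : (∑ k, gradv ξ q k ^ 2) ≠ 0 := hn2ne q
  have hDq : ∀ i j' : Fin d, D q i j' = (if i = j' then (1:ℝ) else 0)
      + (a (ξ q) - 1) * (gradv ξ q i * gradv ξ q j' * (∑ k, gradv ξ q k ^ 2)⁻¹) :=
    fun i j' => hD q i j'
  have hdivMat : ∀ i : Fin d, divMat D q i = ∑ j, pdrv j (fun q' => D q' i j) q :=
    fun i => rfl
  have hLsum : lapl ξ q = ∑ j, hessM ξ q j j := rfl
  -- switch to sum form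
  simp only [dotProduct, Matrix.mulVec, Pi.add_apply, Pi.neg_apply, Pi.smul_apply, smul_eq_mul]
  -- abbreviations
  set G : Fin d → ℝ := gradv ξ q with hGdef
  set HM : Matrix (Fin d) (Fin d) ℝ := hessM ξ q with hHdef
  set W : Fin d → ℝ := gradv V q with hWdef
  set N : ℝ := ∑ k, G k ^ 2 with hNdef
  set A : ℝ := a (ξ q) with hAdef
  set A' : ℝ := deriv a (ξ q) with hA'def
  set L : ℝ := lapl ξ q with hLdef
  set S : ℝ := ∑ i, ∑ j, G i * G j * HM i j with hSdef
  -- helper sum identities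
  have hGK : ∑ j, G j * (∑ k, 2 * G k * HM k j) = 2 * S := by
    calc ∑ j, G j * (∑ k, 2 * G k * HM k j)
        = ∑ j, ∑ k, 2 * (G k * G j * HM k j) := by
          refine Finset.sum_congr rfl fun j _ => ?_
          rw [Finset.mul_sum]
          exact Finset.sum_congr rfl fun k _ => by ring
      _ = ∑ k, ∑ j, 2 * (G k * G j * HM k j) := Finset.sum_comm
      _ = 2 * S := by
          rw [hSdef, Finset.mul_sum]
          exact Finset.sum_congr rfl fun k _ => by rw [Finset.mul_sum]
  have hGR : ∑ i, G i * (∑ j, HM i j * G j) = S := by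
    rw [hSdef]
    refine Finset.sum_congr rfl fun i _ => ?_
    rw [Finset.mul_sum]
    exact Finset.sum_congr rfl fun j _ => by ring
  -- Step A: the drift part
  have h1 : ∀ i, ∑ j, D q i j * W j = W i + (A - 1) * (G i * N⁻¹) * ∑ j, G j * W j := by
    intro i
    have e0 : ∑ j, D q i j * W j
        = ∑ j, ((if i = j then (1:ℝ) else 0) * W j + (A - 1) * (G i * G j * N⁻¹) * W j) :=
      Finset.sum_congr rfl fun j _ => by rw [hDq i j]; ring
    have e1 : ∑ j, (if i = j then (1:ℝ) else 0) * W j = W i := by simp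
    have e2 : ∑ j, (A - 1) * (G i * G j * N⁻¹) * W j
        = (A - 1) * (G i * N⁻¹) * ∑ j, G j * W j := by
      rw [Finset.mul_sum]
      exact Finset.sum_congr rfl fun j _ => by ring
    rw [e0, Finset.sum_add_distrib, e1, e2]
  have stepA : ∑ i, G i * (∑ j, D q i j * W j) = A * ∑ i, W i * G i := by
    have e0 : ∑ i, G i * (∑ j, D q i j * W j)
        = ∑ i, (W i * G i + (A - 1) * N⁻¹ * (∑ j, G j * W j) * G i ^ 2) :=
      Finset.sum_congr rfl fun i _ => by rw [h1 i]; ring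
    have e1 : ∑ i, (A - 1) * N⁻¹ * (∑ j, G j * W j) * G i ^ 2
        = (A - 1) * N⁻¹ * (∑ j, G j * W j) * N := by
      exact (Finset.mul_sum _ _ _).symm
    have e2 : ∑ j, G j * W j = ∑ i, W i * G i :=
      Finset.sum_congr rfl fun j _ => by ring
    rw [e0, Finset.sum_add_distrib, e1, e2]
    field_simp
    ring
  -- Step B: the Hessian contraction
  have stepB : ∑ i, ∑ j, D q i j * HM i j = L + (A - 1) * N⁻¹ * S := by
    have h2 : ∀ i, ∑ j, D q i j * HM i j
        = HM i i + (A - 1) * N⁻¹ * ∑ j, G i * G j * HM i j := by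
      intro i
      have e0 : ∑ j, D q i j * HM i j
          = ∑ j, ((if i = j then (1:ℝ) else 0) * HM i j
              + (A - 1) * N⁻¹ * (G i * G j * HM i j)) :=
        Finset.sum_congr rfl fun j _ => by rw [hDq i j]; ring
      have e1 : ∑ j, (if i = j then (1:ℝ) else 0) * HM i j = HM i i := by simp
      rw [e0, Finset.sum_add_distrib, e1, ← Finset.mul_sum]
    have e0 : ∑ i, ∑ j, D q i j * HM i j
        = ∑ i, (HM i i + (A - 1) * N⁻¹ * ∑ j, G i * G j * HM i j) :=
      Finset.sum_congr rfl fun i _ => h2 i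
    rw [e0, Finset.sum_add_distrib, ← Finset.mul_sum, hLsum]
  -- Step C: the divergence part
  have hdiv : ∀ i, divMat D q i
      = A' * G i * N⁻¹ * N + (A - 1) * N⁻¹ * (∑ j, HM i j * G j)
        + (A - 1) * G i * N⁻¹ * L + -((A - 1) * G i * (N ^ 2)⁻¹) * (2 * S) := by
    intro i
    have e0 : divMat D q i = ∑ j,
        (A' * G i * N⁻¹ * G j ^ 2
          + (A - 1) * N⁻¹ * (HM i j * G j)
          + (A - 1) * G i * N⁻¹ * HM j j
          + -((A - 1) * G i * (N ^ 2)⁻¹) * (G j * (∑ k, 2 * G k * HM k j))) := by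
      rw [hdivMat i]
      refine Finset.sum_congr rfl fun j _ => ?_
      rw [hDd i j]
      ring
    rw [e0, Finset.sum_add_distrib, Finset.sum_add_distrib, Finset.sum_add_distrib,
      ← Finset.mul_sum, ← Finset.mul_sum, ← Finset.mul_sum, ← Finset.mul_sum,
      ← hNdef, hGK]
    rw [← hLsum]
  have stepC : ∑ i, G i * divMat D q i
      = A' * N⁻¹ * N * N + (A - 1) * N⁻¹ * S + (A - 1) * N⁻¹ * L * N
        + -((A - 1) * (N ^ 2)⁻¹) * (2 * S) * N := by
    have e0 : ∑ i, G i * divMat D q i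
        = ∑ i, (A' * N⁻¹ * N * G i ^ 2
            + (A - 1) * N⁻¹ * (G i * (∑ j, HM i j * G j))
            + (A - 1) * N⁻¹ * L * G i ^ 2
            + -((A - 1) * (N ^ 2)⁻¹) * (2 * S) * G i ^ 2) :=
      Finset.sum_congr rfl fun i _ => by rw [hdiv i]; ring
    rw [e0, Finset.sum_add_distrib, Finset.sum_add_distrib, Finset.sum_add_distrib,
      ← Finset.mul_sum, ← Finset.mul_sum, ← Finset.mul_sum, ← Finset.mul_sum,
      ← hNdef, hGR]
  -- assemble
  have split : ∑ i, G i * (-∑ j, D q i j * W j + β⁻¹ * divMat D q i)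
      = -(∑ i, G i * (∑ j, D q i j * W j)) + β⁻¹ * ∑ i, G i * divMat D q i := by
    have e0 : ∑ i, G i * (-∑ j, D q i j * W j + β⁻¹ * divMat D q i)
        = ∑ i, (-(G i * (∑ j, D q i j * W j)) + β⁻¹ * (G i * divMat D q i)) :=
      Finset.sum_congr rfl fun i _ => by ring
    rw [e0, Finset.sum_add_distrib, ← Finset.mul_sum, Finset.sum_neg_distrib]
  rw [split, stepA, stepC, stepB]
  have hβne : β ≠ 0 := ne_of_gt hβ
  field_simp
  ring
end

section
/- Let X be a set, S : X → X a map with S ∘ S = id, φ : X → X a map, and A ⊆ X. Define B := { x ∈ A : S(φ(x)) ∈ A and φ(S(φ(x))) = S(x) }, and define φʳᵉᵛ : X → X by φʳᵉᵛ(x) = φ(x) if x ∈ B and φʳᵉᵛ(x) = S(x) otherwise. Then S ∘ φʳᵉᵛ ∘ S ∘ φʳᵉᵛ = id on X. -/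
open scoped Classical

/-- Reversibility of the numerical flow with reversibility checks: if `S ∘ S = id` and
`φʳᵉᵛ` equals `φ` on the set `B` of configurations passing the forward-solvability,
backward-solvability and reversibility checks, and `S` elsewhere, then
`S ∘ φʳᵉᵛ ∘ S ∘ φʳᵉᵛ = id`. -/
theorem reversibility_check_flow {X : Type*} (S φ : X → X) (hS : S ∘ S = id) (A : Set X) :
    let B : Set X := {x ∈ A | S (φ x) ∈ A ∧ φ (S (φ x)) = S x}
    let φrev : X → X := fun x => if x ∈ B then φ x else S x
    S ∘ φrev ∘ S ∘ φrev = id := by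
  intro B φrev
  have hSS : ∀ y, S (S y) = y := fun y => congrFun hS y
  funext x
  simp only [Function.comp_apply, id_eq]
  by_cases hx : x ∈ B
  · have h1 : φrev x = φ x := if_pos hx
    obtain ⟨hxA, hSφA, hrev⟩ := hx
    have hmem : S (φ x) ∈ B := by
      refine ⟨hSφA, ?_, ?_⟩
      · rw [hrev, hSS]; exact hxA
      · rw [hrev, hSS, hSS]
    rw [h1]
    show S (if S (φ x) ∈ B then φ (S (φ x)) else S (S (φ x))) = x
    rw [if_pos hmem, hrev, hSS]
  · have h1 : φrev x = S x := if_neg hx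
    rw [h1, hSS]
    show S (if x ∈ B then φ x else S x) = x
    rw [if_neg hx, hSS]
end
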